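/- Let $\alpha>-2$ and let $U_{1,\alpha}(x)=\frac{(3+\alpha)^{1/(4+2\alpha)}}{(1+|x|^{2+\alpha})^{1/(2+\alpha)}}$ for $x\in\mathbb{R}^3$. Then $\int_{\mathbb{R}^3}|\nabla U_{1,\alpha}|^2\,dx \;=\; \int_{\mathbb{R}^3}|x|^{\alpha}\,U_{1,\alpha}^{\,6+2\alpha}\,dx \;=\; S_\alpha^{\frac{3+\alpha}{2+\alpha}}.$ -/

import Mathlib

open MeasureTheory Real
open scoped Topology
open Set

/-- `ℝ³` as a Euclidean space. -/
abbrev E3 := EuclideanSpace ℝ (Fin 3)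

lemma betaIoo (u v : ℝ) (hu : 0 < u) (hv : 0 < v) :
    ∫ x in Ioo (0:ℝ) 1, x ^ (u-1) * (1-x) ^ (v-1) =
      Real.Gamma u * Real.Gamma v / Real.Gamma (u+v) := by
  have h := Complex.Gamma_mul_Gamma_eq_betaIntegral (s := (u:ℂ)) (t := (v:ℂ))
    (by simpa using hu) (by simpa using hv)
  have cc : ∀ r : ℝ, Complex.ofReal r = @RCLike.ofReal ℂ _ r := fun r => rfl
  have h2 : ∫ x in Ioo (0:ℝ) 1, (x:ℂ) ^ ((u:ℂ)-1) * (1-(x:ℂ)) ^ ((v:ℂ)-1) =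
      ∫ x in Ioo (0:ℝ) 1, @RCLike.ofReal ℂ _ (x ^ (u-1) * (1-x) ^ (v-1) : ℝ) := by
    refine setIntegral_congr_fun measurableSet_Ioo fun x hx => ?_
    rw [← cc, Complex.ofReal_mul, Complex.ofReal_cpow hx.1.le,
      Complex.ofReal_cpow (by linarith [hx.2]), Complex.ofReal_sub, Complex.ofReal_sub,
      Complex.ofReal_one]
    norm_cast
  have hbeta : Complex.betaIntegral (u:ℂ) (v:ℂ) =
      ((∫ x in Ioo (0:ℝ) 1, x ^ (u-1) * (1-x) ^ (v-1) : ℝ) : ℂ) := by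
    rw [Complex.betaIntegral, intervalIntegral.integral_of_le zero_le_one,
      integral_Ioc_eq_integral_Ioo, h2, _root_.integral_ofReal, ← cc]
  rw [hbeta, ← Complex.ofReal_add, Complex.Gamma_ofReal, Complex.Gamma_ofReal,
    Complex.Gamma_ofReal, ← Complex.ofReal_mul, ← Complex.ofReal_mul] at h
  have h3 := Complex.ofReal_injective h
  rw [h3]
  have hG : Real.Gamma (u+v) ≠ 0 := (Real.Gamma_pos_of_pos (by linarith)).ne'
  field_simp

lemma betaIoi (u v : ℝ) (hu : 0 < u) (hv : 0 < v)
    (hIoo : ∫ x in Ioo (0:ℝ) 1, x ^ (u-1) * (1-x) ^ (v-1) =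
      Real.Gamma u * Real.Gamma v / Real.Gamma (u+v)) :
    ∫ t in Ioi (0:ℝ), t ^ (u-1) * (1+t) ^ (-(u+v)) =
      Real.Gamma u * Real.Gamma v / Real.Gamma (u+v) := by
  have hd : ∀ t ∈ Ioi (0:ℝ), HasDerivWithinAt (fun t : ℝ => t / (1+t))
      ((1+t)^(-2 : ℝ)) (Ioi 0) t := by
    intro t ht
    have h1 : (0:ℝ) < 1 + t := by linarith [mem_Ioi.mp ht]
    have := (hasDerivAt_id t).div ((hasDerivAt_id t).const_add 1) h1.ne'
    refine this.hasDerivWithinAt.congr_deriv ?_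
    rw [rpow_neg h1.le, show (2:ℝ) = ((2:ℕ):ℝ) by norm_num, rpow_natCast]
    simp only [id]
    field_simp
    ring
  have hinj : InjOn (fun t : ℝ => t / (1+t)) (Ioi 0) := by
    intro s hs t ht h
    have hs1 : (0:ℝ) < 1 + s := by linarith [mem_Ioi.mp hs]
    have ht1 : (0:ℝ) < 1 + t := by linarith [mem_Ioi.mp ht]
    field_simp at h
    linarith
  have himg : (fun t : ℝ => t / (1+t)) '' (Ioi 0) = Ioo 0 1 := by
    ext x
    constructor
    · rintro ⟨t, ht, rfl⟩
      have ht1 : (0:ℝ) < 1 + t := by linarith [mem_Ioi.mp ht]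
      exact ⟨div_pos (mem_Ioi.mp ht) ht1, by rw [div_lt_one ht1]; linarith⟩
    · intro hx
      have h1 : (0:ℝ) < 1 - x := by linarith [hx.2]
      refine ⟨x / (1-x), div_pos hx.1 h1, ?_⟩
      have h2 : 1 + x / (1-x) = 1/(1-x) := by field_simp; ring
      simp only [h2]
      field_simp
  have := integral_image_eq_integral_abs_deriv_smul measurableSet_Ioi hd hinj
    (fun x => x ^ (u-1) * (1-x) ^ (v-1))
  rw [himg, hIoo] at this
  rw [this]
  refine setIntegral_congr_fun measurableSet_Ioi fun t ht => Eq.symm ?_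
  have ht0 := mem_Ioi.mp ht
  have h1 : (0:ℝ) < 1 + t := by linarith
  have e1 : (1:ℝ) - t / (1+t) = (1+t)⁻¹ := by field_simp; ring
  rw [smul_eq_mul, abs_of_nonneg (rpow_nonneg h1.le _), e1,
    div_rpow ht0.le h1.le, ← rpow_neg_one (1+t), ← rpow_mul h1.le,
    div_eq_mul_inv, ← rpow_neg h1.le]
  have step : (1+t) ^ (-2:ℝ) * (t ^ (u-1) * (1+t) ^ (-(u-1)) * (1+t) ^ ((-1) * (v-1)))
      = t ^ (u-1) * ((1+t) ^ (-2:ℝ) * ((1+t) ^ (-(u-1)) * (1+t) ^ ((-1) * (v-1)))) := by ring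
  rw [step, ← rpow_add h1, ← rpow_add h1]
  congr 1
  ring

lemma keyInt (p b c : ℝ) (hp : 0 < p)
    (hIoi : ∫ t in Ioi (0:ℝ), t ^ ((b+1)/p - 1) * (1+t) ^ (-c) =
      Real.Gamma ((b+1)/p) * Real.Gamma (c - (b+1)/p) / Real.Gamma c) :
    ∫ r in Ioi (0:ℝ), r ^ b * (1+r^p) ^ (-c) =
      Real.Gamma ((b+1)/p) * Real.Gamma (c - (b+1)/p) / (p * Real.Gamma c) := by
  have h := integral_comp_rpow_Ioi_of_pos (p := p)
    (g := fun t => (1/p) * (t ^ ((b+1)/p - 1) * (1+t) ^ (-c))) hp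
  have e : ∀ r ∈ Ioi (0:ℝ), (p * r ^ (p-1)) •
      ((1/p) * ((r^p) ^ ((b+1)/p - 1) * (1+r^p) ^ (-c))) = r ^ b * (1+r^p) ^ (-c) := by
    intro r hr
    have hr0 := mem_Ioi.mp hr
    have e2 : (r ^ p) ^ ((b+1)/p - 1) = r ^ (b + 1 - p) := by
      rw [← rpow_mul hr0.le]
      congr 1
      field_simp
    rw [smul_eq_mul, e2]
    have e3 : p * r^(p-1) * (1/p * (r^(b+1-p) * (1+r^p)^(-c)))
        = (r^(p-1) * r^(b+1-p)) * (1+r^p)^(-c) := by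
      field_simp
    rw [e3, ← rpow_add hr0]
    congr 1
    ring
  rw [← setIntegral_congr_fun measurableSet_Ioi e, h, integral_const_mul, hIoi]
  field_simp
lemma radial (f : ℝ → ℝ) :
    ∫ x : E3, f ‖x‖ = (4 * π) * ∫ r in Ioi (0:ℝ), r ^ (2:ℕ) * f r := by
  rw [integral_fun_norm_addHaar (volume : Measure E3) f]
  have hdim : Module.finrank ℝ E3 = 3 := by simp [finrank_euclideanSpace_fin]
  have hvol : (volume (Metric.ball (0:E3) 1)).toReal = 4 * π / 3 := by
    rw [EuclideanSpace.volume_ball]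
    have g1 : Real.Gamma ((Fintype.card (Fin 3)) / 2 + 1) = (3/2) * ((1/2) * Real.sqrt π) := by
      rw [show ((Fintype.card (Fin 3) : ℝ)) / 2 + 1 = 3/2 + 1 by simp, Real.Gamma_add_one
        (by norm_num), show (3/2:ℝ) = 1/2 + 1 by norm_num, Real.Gamma_add_one (by norm_num),
        Real.Gamma_one_half_eq]
    have hs : Real.sqrt π ^ Fintype.card (Fin 3) = π * Real.sqrt π := by
      rw [show Fintype.card (Fin 3) = 3 by simp, pow_succ, sq_sqrt pi_nonneg]
    rw [g1, hs]
    have hpos : (0:ℝ) < Real.sqrt π := Real.sqrt_pos.mpr pi_pos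
    rw [ENNReal.ofReal_one, one_pow, one_mul, ENNReal.toReal_ofReal (by positivity)]
    rw [show π * √π / (3 / 2 * (1 / 2 * √π)) = (4:ℝ)/3 * π * (√π / √π) by ring,
      div_self hpos.ne']
    ring
  rw [hdim, measureReal_def, hvol]
  simp only [nsmul_eq_mul, smul_eq_mul, Nat.cast_ofNat]
  push_cast
  ring


/-- The best constant `S_α` in the weighted (Hardy/Hénon–)Sobolev inequality on `ℝ³`. -/
noncomputable def Sconst (a : ℝ) : ℝ :=
  (3 + a) * ((4 * Real.pi / (2 + a)) *
    (Real.Gamma ((3 + a) / (2 + a))) ^ 2 / Real.Gamma (2 * (3 + a) / (2 + a))) ^ ((2 + a) / (3 + a))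

/-- For `U_{1,α}(x) = (3+α)^{1/(4+2α)} / (1+|x|^{2+α})^{1/(2+α)}` one has
`∫ |∇U|² = ∫ |x|^α U^{6+2α} = S_α^{(3+α)/(2+α)}`. -/
theorem stmt1 (a : ℝ) (ha : -2 < a) (U : E3 → ℝ)
    (hU : ∀ x : E3, U x = (3 + a) ^ (1 / (4 + 2 * a)) / (1 + ‖x‖ ^ (2 + a)) ^ (1 / (2 + a))) :
    (∫ x : E3, ‖fderiv ℝ U x‖ ^ 2) = Sconst a ^ ((3 + a) / (2 + a)) ∧
    (∫ x : E3, ‖x‖ ^ a * U x ^ (6 + 2 * a)) = Sconst a ^ ((3 + a) / (2 + a)) := by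
  have hp : (0:ℝ) < 2 + a := by linarith
  have h3 : (0:ℝ) < 3 + a := by linarith
  set c0 : ℝ := (3 + a) ^ (1 / (4 + 2 * a)) with hc0
  have hc0pos : 0 < c0 := rpow_pos_of_pos h3 _
  set s : ℝ := (3 + a) / (2 + a) with hs
  have hspos : 0 < s := div_pos h3 hp
  have hs1 : 1 < s := (one_lt_div hp).mpr (by linarith)
  set c : ℝ := 2 * (3 + a) / (2 + a) with hc
  have hGs : 0 < Real.Gamma s := Real.Gamma_pos_of_pos hspos
  have hG2s : 0 < Real.Gamma c := Real.Gamma_pos_of_pos (by positivity)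
  -- target value
  have hX : (0:ℝ) < (4 * Real.pi / (2 + a)) * (Real.Gamma s) ^ 2 / Real.Gamma c := by
    have := Real.pi_pos; positivity
  have hRHS : Sconst a ^ ((3 + a) / (2 + a)) =
      (3 + a) ^ s * ((4 * Real.pi / (2 + a)) * (Real.Gamma s) ^ 2 / Real.Gamma c) := by
    rw [Sconst, Real.mul_rpow h3.le (rpow_nonneg hX.le _), ← Real.rpow_mul hX.le,
      show (2+a)/(3+a) * ((3+a)/(2+a)) = 1 by field_simp, Real.rpow_one]
  -- Gamma identities
  have hGs1 : Real.Gamma (s + 1) = s * Real.Gamma s := Real.Gamma_add_one hspos.ne'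
  have hGt : Real.Gamma (1 / (2 + a)) = (2 + a) * Real.Gamma s := by
    have h1 : s = 1 / (2 + a) + 1 := by
      rw [hs, div_add' _ _ _ hp.ne', div_eq_div_iff hp.ne' hp.ne']
      ring
    have h2 : Real.Gamma s = (1 / (2 + a)) * Real.Gamma (1 / (2 + a)) := by
      rw [h1, Real.Gamma_add_one (by positivity)]
    rw [h2]; field_simp
  have h4 : (0:ℝ) < 4 + 2 * a := by linarith
  have hc06 : c0 ^ (6 + 2 * a) = (3 + a) ^ s := by
    rw [hc0, ← Real.rpow_mul h3.le]
    congr 1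
    rw [hs]
    field_simp
    ring
  -- part 2
  have hF2 : ∀ x : E3, ‖x‖ ^ a * U x ^ (6 + 2 * a) =
      ‖x‖ ^ a * (c0 ^ (6 + 2 * a) * (1 + ‖x‖ ^ (2 + a)) ^ (-c)) := by
    intro x
    have h1b : (0:ℝ) < 1 + ‖x‖ ^ (2 + a) := by positivity
    rw [hU x, div_rpow hc0pos.le (rpow_nonneg h1b.le _), ← Real.rpow_mul h1b.le,
      div_eq_mul_inv, ← Real.rpow_neg h1b.le]
    rw [show -(1 / (2 + a) * (6 + 2 * a)) = -c by rw [hc]; field_simp; ring]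
  have upos2 : (0:ℝ) < (2 + a + 1) / (2 + a) := div_pos (by linarith) hp
  have e2 : c - (2 + a + 1) / (2 + a) = s := by
    rw [hc, hs, sub_eq_iff_eq_add, ← add_div]
    congr 1
    ring
  have e1 : (2 + a + 1) / (2 + a) = s := by rw [hs]; congr 1; ring
  have vpos2 : (0:ℝ) < c - (2 + a + 1) / (2 + a) := by rw [e2]; exact hspos
  have hbeta2 : ∫ t in Ioi (0:ℝ), t ^ ((2 + a + 1) / (2 + a) - 1) * (1 + t) ^ (-c) =
      Real.Gamma ((2 + a + 1) / (2 + a)) * Real.Gamma (c - (2 + a + 1) / (2 + a)) /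
        Real.Gamma c := by
    have h := betaIoi ((2 + a + 1) / (2 + a)) (c - (2 + a + 1) / (2 + a)) upos2 vpos2
      (betaIoo _ _ upos2 vpos2)
    rwa [show (2 + a + 1) / (2 + a) + (c - (2 + a + 1) / (2 + a)) = c by ring] at h
  have hkey2 := keyInt (2 + a) (2 + a) c hp hbeta2
  rw [e2, e1] at hkey2
  have hinner2 : ∫ r in Ioi (0:ℝ), r ^ (2:ℕ) *
      (r ^ a * (c0 ^ (6 + 2 * a) * (1 + r ^ (2 + a)) ^ (-c))) =
      (3 + a) ^ s * ∫ r in Ioi (0:ℝ), r ^ (2 + a) * (1 + r ^ (2 + a)) ^ (-c) := by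
    rw [← integral_const_mul]
    refine setIntegral_congr_fun measurableSet_Ioi fun r hr => ?_
    have hr0 := mem_Ioi.mp hr
    have e : (r:ℝ) ^ (2:ℕ) * r ^ a = r ^ (2 + a) := by
      rw [← rpow_natCast r 2, ← rpow_add hr0]
      norm_num
    calc r ^ (2:ℕ) * (r ^ a * (c0 ^ (6 + 2 * a) * (1 + r ^ (2 + a)) ^ (-c)))
        = (r ^ (2:ℕ) * r ^ a) * (c0 ^ (6 + 2 * a) * (1 + r ^ (2 + a)) ^ (-c)) := by ring
      _ = (3 + a) ^ s * (r ^ (2 + a) * (1 + r ^ (2 + a)) ^ (-c)) := by rw [e, hc06]; ring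
  have part2 : (∫ x : E3, ‖x‖ ^ a * U x ^ (6 + 2 * a)) = Sconst a ^ ((3 + a) / (2 + a)) := by
    rw [integral_congr_ae (Filter.Eventually.of_forall hF2),
      radial (fun r => r ^ a * (c0 ^ (6 + 2 * a) * (1 + r ^ (2 + a)) ^ (-c))),
      hinner2, hkey2, hRHS]
    field_simp
  refine ⟨?_, part2⟩
  -- part 1
  set phi : ℝ → ℝ := fun r => c0 * (1 + r ^ (2 + a)) ^ (-(1 / (2 + a))) with hphi
  have hUphi : ∀ y : E3, U y = phi ‖y‖ := by
    intro y
    have h1b : (0:ℝ) < 1 + ‖y‖ ^ (2 + a) := by positivity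
    rw [hU y]
    show _ = c0 * (1 + ‖y‖ ^ (2 + a)) ^ (-(1 / (2 + a)))
    rw [Real.rpow_neg h1b.le, div_eq_mul_inv]
  have hc02 : (c0:ℝ) ^ (2:ℕ) = (3 + a) ^ (1 / (2 + a)) := by
    rw [hc0, ← Real.rpow_natCast ((3 + a) ^ (1 / (4 + 2 * a))) 2, ← Real.rpow_mul h3.le]
    congr 1
    push_cast
    field_simp
    ring
  have hpt1 : ∀ x : E3, x ≠ 0 → ‖fderiv ℝ U x‖ ^ 2 =
      c0 ^ (2:ℕ) * (‖x‖ ^ (2 + 2 * a) * (1 + ‖x‖ ^ (2 + a)) ^ (-c)) := by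
    intro x hx
    have hr : (0:ℝ) < ‖x‖ := norm_pos_iff.mpr hx
    have h1b : (0:ℝ) < 1 + ‖x‖ ^ (2 + a) := by positivity
    have hdn : DifferentiableAt ℝ (fun y : E3 => ‖y‖) x :=
      (contDiffAt_norm (𝕜 := ℝ) (n := 1) hx).differentiableAt one_ne_zero
    have hd0 : HasDerivAt (fun r : ℝ => 1 + r ^ (2 + a)) ((2 + a) * ‖x‖ ^ (2 + a - 1)) ‖x‖ :=
      (Real.hasDerivAt_rpow_const (Or.inl hr.ne')).const_add 1
    have hd1 : HasDerivAt (fun r : ℝ => (1 + r ^ (2 + a)) ^ (-(1 / (2 + a))))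
        ((2 + a) * ‖x‖ ^ (2 + a - 1) * (-(1 / (2 + a))) *
          (1 + ‖x‖ ^ (2 + a)) ^ (-(1 / (2 + a)) - 1)) ‖x‖ :=
      hd0.rpow_const (Or.inl h1b.ne')
    have hdphi : HasDerivAt phi (c0 * ((2 + a) * ‖x‖ ^ (2 + a - 1) * (-(1 / (2 + a))) *
        (1 + ‖x‖ ^ (2 + a)) ^ (-(1 / (2 + a)) - 1))) ‖x‖ := hd1.const_mul c0
    have hcomp : HasFDerivAt U ((c0 * ((2 + a) * ‖x‖ ^ (2 + a - 1) * (-(1 / (2 + a))) *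
        (1 + ‖x‖ ^ (2 + a)) ^ (-(1 / (2 + a)) - 1))) • fderiv ℝ (fun y : E3 => ‖y‖) x) x := by
      have hUeq : U = phi ∘ (fun y : E3 => ‖y‖) := funext hUphi
      rw [hUeq]
      exact hdphi.comp_hasFDerivAt x hdn.hasFDerivAt
    rw [hcomp.fderiv, norm_smul, norm_fderiv_norm hdn, mul_one, Real.norm_eq_abs, sq_abs]
    have eR : (‖x‖ ^ (2 + a - 1)) ^ (2:ℕ) = ‖x‖ ^ (2 + 2 * a) := by
      rw [← Real.rpow_natCast (‖x‖ ^ (2 + a - 1)) 2, ← Real.rpow_mul hr.le]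
      congr 1
      push_cast
      ring
    have eX : ((1 + ‖x‖ ^ (2 + a)) ^ (-(1 / (2 + a)) - 1)) ^ (2:ℕ)
        = (1 + ‖x‖ ^ (2 + a)) ^ (-c) := by
      rw [← Real.rpow_natCast ((1 + ‖x‖ ^ (2 + a)) ^ (-(1 / (2 + a)) - 1)) 2,
        ← Real.rpow_mul h1b.le]
      congr 1
      rw [hc]
      push_cast
      field_simp
      ring
    rw [mul_pow, mul_pow, mul_pow, mul_pow, eR, eX]
    field_simp
  have hae : (fun x : E3 => ‖fderiv ℝ U x‖ ^ 2) =ᵐ[volume]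
      (fun x : E3 => c0 ^ (2:ℕ) * (‖x‖ ^ (2 + 2 * a) * (1 + ‖x‖ ^ (2 + a)) ^ (-c))) := by
    have h0 : volume ({(0:E3)} : Set E3) = 0 := measure_singleton 0
    exact Filter.eventuallyEq_of_mem (MeasureTheory.compl_mem_ae_iff.mpr h0)
      fun x hx => hpt1 x hx
  have upos1 : (0:ℝ) < (4 + 2 * a + 1) / (2 + a) := div_pos (by linarith) hp
  have e2' : c - (4 + 2 * a + 1) / (2 + a) = 1 / (2 + a) := by
    rw [hc, sub_eq_iff_eq_add, ← add_div]
    congr 1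
    ring
  have e1' : (4 + 2 * a + 1) / (2 + a) = s + 1 := by
    rw [hs, div_add' _ _ _ hp.ne', div_eq_div_iff hp.ne' hp.ne']
    ring
  have vpos1 : (0:ℝ) < c - (4 + 2 * a + 1) / (2 + a) := by rw [e2']; positivity
  have hbeta1 : ∫ t in Ioi (0:ℝ), t ^ ((4 + 2 * a + 1) / (2 + a) - 1) * (1 + t) ^ (-c) =
      Real.Gamma ((4 + 2 * a + 1) / (2 + a)) * Real.Gamma (c - (4 + 2 * a + 1) / (2 + a)) /
        Real.Gamma c := by
    have h := betaIoi ((4 + 2 * a + 1) / (2 + a)) (c - (4 + 2 * a + 1) / (2 + a)) upos1 vpos1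
      (betaIoo _ _ upos1 vpos1)
    rwa [show (4 + 2 * a + 1) / (2 + a) + (c - (4 + 2 * a + 1) / (2 + a)) = c by ring] at h
  have hkey1 := keyInt (2 + a) (4 + 2 * a) c hp hbeta1
  rw [e2', e1', hGs1, hGt] at hkey1
  have hinner1 : ∫ r in Ioi (0:ℝ), r ^ (2:ℕ) *
      (c0 ^ (2:ℕ) * (r ^ (2 + 2 * a) * (1 + r ^ (2 + a)) ^ (-c))) =
      (3 + a) ^ (1 / (2 + a)) * ∫ r in Ioi (0:ℝ), r ^ (4 + 2 * a) * (1 + r ^ (2 + a)) ^ (-c) := by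
    rw [← integral_const_mul]
    refine setIntegral_congr_fun measurableSet_Ioi fun r hr => ?_
    have hr0 := mem_Ioi.mp hr
    have e : (r:ℝ) ^ (2:ℕ) * r ^ (2 + 2 * a) = r ^ (4 + 2 * a) := by
      rw [← rpow_natCast r 2, ← rpow_add hr0]
      push_cast
      congr 1
      ring
    calc r ^ (2:ℕ) * (c0 ^ (2:ℕ) * (r ^ (2 + 2 * a) * (1 + r ^ (2 + a)) ^ (-c)))
        = (r ^ (2:ℕ) * r ^ (2 + 2 * a)) * (c0 ^ (2:ℕ) * (1 + r ^ (2 + a)) ^ (-c)) := by ring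
      _ = (3 + a) ^ (1 / (2 + a)) * (r ^ (4 + 2 * a) * (1 + r ^ (2 + a)) ^ (-c)) := by
          rw [e, hc02]; ring
  have hA : (3 + a) ^ s = (3 + a) ^ (1 / (2 + a)) * (3 + a) := by
    rw [show s = 1 / (2 + a) + 1 by
        rw [hs, div_add' _ _ _ hp.ne', div_eq_div_iff hp.ne' hp.ne']; ring,
      Real.rpow_add_one h3.ne']
  rw [integral_congr_ae hae,
    radial (fun r => c0 ^ (2:ℕ) * (r ^ (2 + 2 * a) * (1 + r ^ (2 + a)) ^ (-c))),
    hinner1, hkey1, hRHS, hA, hs]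
  field_simp
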